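/- If every voter approves exactly k candidates, then: (1) if there exists a size-k committee W with W ∩ A_i ≠ ∅ for all i, then every MAV-optimal committee intersects every ballot, and any such committee provides JR; (2) if no size-k committee intersects all ballots, then every size-k committee has MAV score exactly 2k. -/

import Mathlib

open Finset

def providesJR {α : Type*} [DecidableEq α] (n k : ℕ) (A : Fin n → Finset α)
    (W : Finset α) : Prop :=
  ¬ ∃ (N : Finset (Fin n)) (c : α),
      n ≤ k * N.card ∧ (∀ i ∈ N, c ∈ A i) ∧ (∀ i ∈ N, A i ∩ W = ∅)

def hamming {α : Type*} [DecidableEq α] (Q T : Finset α) : ℕ :=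
  (Q \ T).card + (T \ Q).card

def mavScore {α : Type*} [DecidableEq α] {n : ℕ} (A : Fin n → Finset α)
    (W : Finset α) : ℕ :=
  Finset.univ.sup (fun i : Fin n => hamming W (A i))

/-- if every voter approves exactly `k` candidates, then
(1) if some size-`k` committee intersects every ballot, then every MAV-optimal
size-`k` committee intersects every ballot and provides JR; and
(2) if no size-`k` committee intersects all ballots, then every size-`k`
committee has MAV score exactly `2k`. -/

lemma hamming_eq {α : Type*} [DecidableEq α] {Q T : Finset α} {k : ℕ}
    (hQ : Q.card = k) (hT : T.card = k) :
    hamming Q T = (k - (Q ∩ T).card) + (k - (Q ∩ T).card) := by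
  have h1 : (Q ∩ T).card + (Q \ T).card = k := by
    rw [Finset.card_inter_add_card_sdiff, hQ]
  have h2 : (Q ∩ T).card + (T \ Q).card = k := by
    rw [Finset.inter_comm, Finset.card_inter_add_card_sdiff, hT]
  unfold hamming; omega

lemma hamming_le {α : Type*} [DecidableEq α] {Q T : Finset α} {k : ℕ}
    (hQ : Q.card = k) (hT : T.card = k) : hamming Q T ≤ 2 * k := by
  rw [hamming_eq hQ hT]; omega

lemma hamming_lt {α : Type*} [DecidableEq α] {Q T : Finset α} {k : ℕ}
    (hQ : Q.card = k) (hT : T.card = k) (h : (Q ∩ T).Nonempty) :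
    hamming Q T < 2 * k := by
  have := Finset.card_pos.mpr h
  have hle : (Q ∩ T).card ≤ k := hQ ▸ Finset.card_le_card (Finset.inter_subset_left)
  rw [hamming_eq hQ hT]; omega

lemma hamming_empty {α : Type*} [DecidableEq α] {Q T : Finset α} {k : ℕ}
    (hQ : Q.card = k) (hT : T.card = k) (h : Q ∩ T = ∅) :
    hamming Q T = 2 * k := by
  rw [hamming_eq hQ hT, h, Finset.card_empty]; omega

theorem mav_JR_restricted {α : Type*} [DecidableEq α] [Fintype α]
    (n k : ℕ) (hn : 0 < n) (hk : 0 < k) (hkcard : k ≤ Fintype.card α)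
    (A : Fin n → Finset α) (hA : ∀ i, (A i).card = k) :
    ((∃ W₀ : Finset α, W₀.card = k ∧ ∀ i, (W₀ ∩ A i).Nonempty) →
      ∀ W : Finset α, W.card = k →
        (∀ W' : Finset α, W'.card = k → mavScore A W ≤ mavScore A W') →
        (∀ i, (W ∩ A i).Nonempty) ∧ providesJR n k A W) ∧
    ((¬ ∃ W₀ : Finset α, W₀.card = k ∧ ∀ i, (W₀ ∩ A i).Nonempty) →
      ∀ W : Finset α, W.card = k → mavScore A W = 2 * k) := by
  constructor
  · rintro ⟨W₀, hW₀k, hW₀⟩ W hWk hopt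
    have hlt : mavScore A W < 2 * k := by
      calc mavScore A W ≤ mavScore A W₀ := hopt W₀ hW₀k
        _ < 2 * k := by
          apply Finset.sup_lt_iff (show (⊥:ℕ) < 2*k by simp; omega) |>.mpr
          intro i _
          exact hamming_lt hW₀k (hA i) (hW₀ i)
    have hint : ∀ i, (W ∩ A i).Nonempty := by
      intro i
      by_contra hno
      have he : W ∩ A i = ∅ := Finset.not_nonempty_iff_eq_empty.mp hno
      have : hamming W (A i) ≤ mavScore A W :=
        Finset.le_sup (f := fun j => hamming W (A j)) (Finset.mem_univ i)
      rw [hamming_empty hWk (hA i) he] at this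
      omega
    refine ⟨hint, ?_⟩
    rintro ⟨N, c, hcard, hc, hdis⟩
    rcases N.eq_empty_or_nonempty with rfl | ⟨i, hi⟩
    · simp at hcard; omega
    · have := hdis i hi
      have := hint i
      rw [Finset.inter_comm] at this
      rw [hdis i hi] at this
      exact Finset.not_nonempty_empty this
  · intro hno W hWk
    push_neg at hno
    obtain ⟨i, hi⟩ := hno W hWk
    have he : W ∩ A i = ∅ := hi
    apply le_antisymm
    · apply Finset.sup_le
      intro j _
      exact hamming_le hWk (hA j)
    · calc 2 * k = hamming W (A i) := (hamming_empty hWk (hA i) he).symm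
        _ ≤ _ := Finset.le_sup (f := fun j => hamming W (A j)) (Finset.mem_univ i)
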